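/- Let Γ be a finite directed graph, let p be a nonempty directed circuit in Γ and let d be a directed path in Γ starting at the basepoint of p such that p and d share no nontrivial common prefix. Then the set L_{p,d} = {(vp^r d, vp^s d) : r,s ≥ 0, v a suffix of p} ∪ {(q,q) : q a suffix of d} is a closed inverse subsemigroup of the graph inverse semigroup S(Γ). -/

import Mathlib

/-- A (finite) directed graph: vertices, edges, and source/target maps. -/
structure DGraph where
  V : Type
  E : Type
  src : E → V
  tgt : E → V

namespace DGraph

/-- The vertex reached after traversing a list of edges from a vertex. -/
def walkEnd (G : DGraph) : G.V → List G.E → G.V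
  | v, [] => v
  | _, e :: l => walkEnd G (G.tgt e) l

/-- The list of edges forms a directed walk starting at the given vertex. -/
def IsWalk (G : DGraph) : G.V → List G.E → Prop
  | _, [] => True
  | v, e :: l => G.src e = v ∧ IsWalk G (G.tgt e) l

variable (G : DGraph)

@[simp] theorem walkEnd_nil (v : G.V) : G.walkEnd v [] = v := rfl
@[simp] theorem walkEnd_cons (v : G.V) (e : G.E) (l : List G.E) :
    G.walkEnd v (e :: l) = G.walkEnd (G.tgt e) l := rfl
@[simp] theorem isWalk_nil (v : G.V) : G.IsWalk v [] := trivial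
@[simp] theorem isWalk_cons (v : G.V) (e : G.E) (l : List G.E) :
    G.IsWalk v (e :: l) ↔ G.src e = v ∧ G.IsWalk (G.tgt e) l := Iff.rfl

theorem isWalk_append (v : G.V) (l1 l2 : List G.E) :
    G.IsWalk v (l1 ++ l2) ↔ G.IsWalk v l1 ∧ G.IsWalk (G.walkEnd v l1) l2 := by
  induction l1 generalizing v with
  | nil => simp [IsWalk, walkEnd]
  | cons e l ih => simp [IsWalk, walkEnd, ih, and_assoc]

/-- A directed path in `G`: an initial vertex together with a compatible
list of edges, traversed in order (empty paths are allowed). -/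
structure DPath (G : DGraph) where
  first : G.V
  edges : List G.E
  wf : G.IsWalk first edges

namespace DPath

variable {G}

/-- The terminal vertex of a directed path. -/
def last (p : G.DPath) : G.V := G.walkEnd p.first p.edges

/-- The list of vertices lying on a directed path. -/
def vertexList (p : G.DPath) : List G.V := p.first :: p.edges.map G.tgt

/-- `q` is a suffix (terminal segment) of `p`: `p = l ⬝ q` for some edge list `l`. -/
def IsSuffixOf (q p : G.DPath) : Prop :=
  ∃ l : List G.E, p.edges = l ++ q.edges ∧ q.first = G.walkEnd p.first l

end DPath

theorem isWalk_chopAppend {u v w : G.DPath} (hs : v.IsSuffixOf u) (hvw : v.first = w.first) :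
    G.IsWalk u.first (u.edges.take (u.edges.length - v.edges.length) ++ w.edges) := by
  obtain ⟨l, hl, hfst⟩ := hs
  rw [hl]
  have hlen : (l ++ v.edges).length - v.edges.length = l.length := by simp
  rw [hlen, List.take_left, G.isWalk_append]
  have hu := u.wf
  rw [hl, G.isWalk_append] at hu
  refine ⟨hu.1, ?_⟩
  rw [← hfst, hvw]
  exact w.wf

theorem isWalk_concat {p q : G.DPath} (h : q.first = p.last) :
    G.IsWalk p.first (p.edges ++ q.edges) := by
  rw [G.isWalk_append]
  refine ⟨p.wf, ?_⟩
  show G.IsWalk p.last q.edges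
  rw [← h]
  exact q.wf

/-- Concatenation of composable directed paths. -/
def concatPath (p q : G.DPath) (h : q.first = p.last) : G.DPath :=
  ⟨p.first, p.edges ++ q.edges, G.isWalk_concat h⟩

theorem isWalk_replicate (a : G.E) (h : G.tgt a = G.src a) (m : ℕ) :
    G.IsWalk (G.src a) (List.replicate m a) := by
  induction m with
  | zero => trivial
  | succ n ih => rw [List.replicate_succ, G.isWalk_cons]; exact ⟨rfl, by rw [h]; exact ih⟩

/-- The path traversing a loop `a` exactly `m` times. -/
def loopPow (a : G.E) (h : G.tgt a = G.src a) (m : ℕ) : G.DPath :=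
  ⟨G.src a, List.replicate m a, G.isWalk_replicate a h m⟩

/-- `p` is a nonempty directed circuit. -/
def IsCircuit (p : G.DPath) : Prop := p.edges ≠ [] ∧ p.last = p.first

/-- `p` and `d` share no nontrivial common prefix (initial segment). -/
def NoCommonPrefix (p d : G.DPath) : Prop :=
  ∀ l : List G.E, l ≠ [] → l <+: p.edges → ¬ l <+: d.edges

end DGraph

/-- The underlying set of the graph inverse semigroup `S(Γ)`: pairs of directed
paths with the same initial vertex, together with a zero element. -/
inductive GIS (G : DGraph) where
  | zero : GIS G
  | pair (a b : G.DPath) (h : a.first = b.first) : GIS G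

namespace GIS

open scoped Classical in
/-- The multiplication of the graph inverse semigroup:
`(t,u)(v,w) = (t,pw)` if `u = pv`, `(pt,w)` if `v = pu`, and `0` otherwise. -/
noncomputable def mul {G : DGraph} : GIS G → GIS G → GIS G
  | .zero, _ => .zero
  | .pair _ _ _, .zero => .zero
  | .pair t u h1, .pair v w h2 =>
    if hs : v.IsSuffixOf u then
      .pair t ⟨t.first, u.edges.take (u.edges.length - v.edges.length) ++ w.edges,
        by rw [h1]; exact G.isWalk_chopAppend hs h2⟩ rfl
    else if hs' : u.IsSuffixOf v then
      .pair ⟨v.first, v.edges.take (v.edges.length - u.edges.length) ++ t.edges,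
        G.isWalk_chopAppend hs' h1.symm⟩ w h2
    else .zero

noncomputable instance {G : DGraph} : Mul (GIS G) := ⟨GIS.mul⟩

/-- The inverse: `(v,w)⁻¹ = (w,v)` and `0⁻¹ = 0`. -/
def inv {G : DGraph} : GIS G → GIS G
  | .zero => .zero
  | .pair a b h => .pair b a h.symm

/-- The natural partial order: `x ≤ y` iff `x = e * y` for some idempotent `e`. -/
def le {G : DGraph} (x y : GIS G) : Prop := ∃ e : GIS G, e * e = e ∧ x = e * y

end GIS

/-- `L` is a closed inverse subsemigroup of `S(Γ)`: a nonempty subset closed under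
multiplication, inverses, and upward closed in the natural partial order. -/
def IsCISS (G : DGraph) (L : Set (GIS G)) : Prop :=
  L.Nonempty ∧ (∀ a ∈ L, ∀ b ∈ L, a * b ∈ L) ∧ (∀ a ∈ L, a.inv ∈ L) ∧
    (∀ a ∈ L, ∀ s : GIS G, GIS.le a s → s ∈ L)

/-- The closed inverse subsemigroup `↑{(u,u)}` of (finite) chain type:
all `(q,q)` with `q` a suffix of `u`. -/
def chainSet (G : DGraph) (u : G.DPath) : Set (GIS G) :=
  {x | ∃ q : G.DPath, q.IsSuffixOf u ∧ x = GIS.pair q q rfl}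

/-- The edge list of the `r`-th power of the path `p`. -/
def powEdges {G : DGraph} (p : G.DPath) (r : ℕ) : List G.E :=
  (List.replicate r p.edges).flatten

/-- The closed inverse subsemigroup of cycle type
`L_{p,d} = {(v p^r d, v p^s d) : r,s ≥ 0, v a suffix of p} ∪ {(q,q) : q a suffix of d}`. -/
def cycleSet (G : DGraph) (p d : G.DPath) : Set (GIS G) :=
  {x | (∃ (r s : ℕ) (v a b : G.DPath) (h : a.first = b.first),
          v.IsSuffixOf p ∧ x = GIS.pair a b h ∧
          a.first = v.first ∧ a.edges = v.edges ++ powEdges p r ++ d.edges ∧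
          b.first = v.first ∧ b.edges = v.edges ++ powEdges p s ++ d.edges) ∨
       (∃ q : G.DPath, q.IsSuffixOf d ∧ x = GIS.pair q q rfl)}

/-- `L` is a chain of idempotents: all elements are idempotent and any two are
comparable in the natural partial order. -/
def IsChainOfIdem (G : DGraph) (L : Set (GIS G)) : Prop :=
  (∀ x ∈ L, x * x = x) ∧ ∀ x ∈ L, ∀ y ∈ L, GIS.le x y ∨ GIS.le y x

/-- The set of right cosets `↑(Lt)` (for `t` with `t t⁻¹ ∈ L`) of a closed inverse
subsemigroup `L`. -/
def cosets (G : DGraph) (L : Set (GIS G)) : Set (Set (GIS G)) :=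
  {C | ∃ t : GIS G, t * t.inv ∈ L ∧ C = {s | ∃ x ∈ L, GIS.le (x * t) s}}

/-- `H` and `K` are conjugate: for some `s`, `s⁻¹Hs ⊆ K` and `sKs⁻¹ ⊆ H`. -/
def Conjugate (G : DGraph) (H K : Set (GIS G)) : Prop :=
  ∃ s : GIS G, (∀ h ∈ H, s.inv * h * s ∈ K) ∧ (∀ k ∈ K, s * k * s.inv ∈ H)

/-- The set of directed paths with initial vertex `v` whose first edge (if any)
is not an edge of `w`. -/
def Npaths (G : DGraph) (v : G.V) (w : G.DPath) : Set G.DPath :=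
  {t | t.first = v ∧ ∀ e, t.edges.head? = some e → e ∉ w.edges}

/-! ### Auxiliary lemmas -/
namespace Aux4

open DGraph List

variable {G : DGraph}

theorem dpext {x y : G.DPath} (h1 : x.first = y.first) (h2 : x.edges = y.edges) : x = y := by
  cases x; cases y; cases h1; cases h2; rfl

theorem walkEnd_append' (v : G.V) (l1 l2 : List G.E) :
    G.walkEnd v (l1 ++ l2) = G.walkEnd (G.walkEnd v l1) l2 := by
  induction l1 generalizing v with
  | nil => rfl
  | cons e l ih => simpa using ih (G.tgt e)

theorem walkEnd_congr (x y : G.V) {l : List G.E} (h : l ≠ []) :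
    G.walkEnd x l = G.walkEnd y l := by
  cases l with
  | nil => exact absurd rfl h
  | cons e t => rfl

theorem walk_start_unique {x y : G.V} {l : List G.E} (hx : G.IsWalk x l) (hy : G.IsWalk y l)
    (h : l ≠ []) : x = y := by
  cases l with
  | nil => exact absurd rfl h
  | cons e t => exact hx.1.symm.trans hy.1

theorem last_of_suffix {Y X : G.DPath} (h : Y.IsSuffixOf X) : Y.last = X.last := by
  obtain ⟨l, hl, hf⟩ := h
  show G.walkEnd Y.first Y.edges = G.walkEnd X.first X.edges
  rw [hl, walkEnd_append', ← hf]

theorem last_nil {X : G.DPath} (h : X.edges = []) : X.last = X.first := by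
  show G.walkEnd X.first X.edges = X.first
  rw [h]; rfl

/-- List-suffix plus matching last vertices gives a path suffix. -/
theorem suffix_isSuffixOf {C B : G.DPath} (h : C.edges <:+ B.edges) (hl : C.last = B.last) :
    C.IsSuffixOf B := by
  obtain ⟨m, hm⟩ := h
  refine ⟨m, hm.symm, ?_⟩
  cases hC : C.edges with
  | nil =>
    have h1 : C.first = B.last := by rw [← last_nil hC, hl]
    have h2 : B.last = G.walkEnd B.first m := by
      show G.walkEnd B.first B.edges = _
      rw [← hm, hC, List.append_nil]
    exact h1.trans h2
  | cons e t =>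
    have hBw := B.wf
    rw [← hm, hC, G.isWalk_append] at hBw
    have hCw := C.wf
    rw [hC] at hCw
    exact walk_start_unique hCw hBw.2 (by simp)

theorem take_sub {α : Type*} {m c B : List α} (h : B = m ++ c) :
    B.take (B.length - c.length) = m := by
  subst h
  rw [List.length_append, Nat.add_sub_cancel, List.take_left]

/-! ### Powers of a path -/

theorem powEdges_zero (p : G.DPath) : powEdges p 0 = [] := rfl

theorem powEdges_succ (p : G.DPath) (r : ℕ) : powEdges p (r + 1) = p.edges ++ powEdges p r := by
  show (List.replicate (r+1) p.edges).flatten = p.edges ++ (List.replicate r p.edges).flatten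
  rw [List.replicate_succ, List.flatten_cons]

theorem powEdges_one (p : G.DPath) : powEdges p 1 = p.edges := by
  show (List.replicate 1 p.edges).flatten = p.edges
  rw [List.replicate_one, List.flatten_cons, List.flatten_nil, List.append_nil]

theorem powEdges_add (p : G.DPath) (a b : ℕ) :
    powEdges p (a + b) = powEdges p a ++ powEdges p b := by
  show (List.replicate (a+b) p.edges).flatten = _ ++ _
  rw [List.replicate_add, List.flatten_append]; rfl

theorem powEdges_length (p : G.DPath) (r : ℕ) :
    (powEdges p r).length = r * p.edges.length := by
  induction r with
  | zero => simp [powEdges_zero]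
  | succ n ih => rw [powEdges_succ, List.length_append, ih]; ring

theorem suffix_suffix_le {α : Type*} {a b c : List α} (h1 : a <:+ c) (h2 : b <:+ c)
    (h : a.length ≤ b.length) : a <:+ b := by
  rcases List.suffix_or_suffix_of_suffix h1 h2 with h' | h'
  · exact h'
  · rw [h'.eq_of_length_le h]

/-- Any suffix of a power of `p` is a (short) suffix of `p` followed by a power of `p`. -/
theorem suffix_pow {p : G.DPath} (hP : p.edges ≠ []) {t : List G.E} {m : ℕ}
    (h : t <:+ powEdges p m) :
    ∃ v j, v <:+ p.edges ∧ v.length < p.edges.length ∧ t = v ++ powEdges p j := by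
  induction m with
  | zero =>
    rw [powEdges_zero] at h
    rw [List.suffix_nil] at h
    exact ⟨[], 0, List.nil_suffix, List.length_pos_iff.2 hP, by simp [h, powEdges_zero]⟩
  | succ m ih =>
    rw [powEdges_succ] at h
    by_cases hle : t.length ≤ (powEdges p m).length
    · exact ih (suffix_suffix_le h (List.suffix_append _ _) hle)
    · push_neg at hle
      have ht := List.suffix_iff_eq_drop.mp h
      rw [List.length_append] at ht
      set k := p.edges.length + (powEdges p m).length - t.length with hk
      have hkle : k < p.edges.length := by
        have := h.length_le
        rw [List.length_append] at this
        omega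
      rcases Nat.eq_zero_or_pos k with hk0 | hk0
      · refine ⟨[], m + 1, List.nil_suffix, List.length_pos_iff.2 hP, ?_⟩
        rw [ht, hk0, List.drop_zero, powEdges_succ, List.nil_append]
      · refine ⟨p.edges.drop k, m, List.drop_suffix _ _, ?_, ?_⟩
        · rw [List.length_drop]; omega
        · rw [ht, List.drop_append, Nat.sub_eq_zero_of_le hkle.le,
            List.drop_zero]


/-! ### Multiplication lemmas -/

theorem mul_zero' (x : GIS G) : x * GIS.zero = GIS.zero := by
  show GIS.mul x GIS.zero = GIS.zero
  cases x <;> rfl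

theorem zero_mul' (x : GIS G) : GIS.zero * x = GIS.zero := by rfl

theorem mul_pair_suff {t u v w : G.DPath} (h1 : t.first = u.first) (h2 : v.first = w.first)
    (hs : v.IsSuffixOf u) :
    GIS.pair t u h1 * GIS.pair v w h2 =
      GIS.pair t ⟨t.first, u.edges.take (u.edges.length - v.edges.length) ++ w.edges,
        by rw [h1]; exact G.isWalk_chopAppend hs h2⟩ rfl := by
  show GIS.mul _ _ = _
  unfold GIS.mul
  dsimp only
  rw [dif_pos hs]

theorem mul_pair_suff2 {t u v w : G.DPath} (h1 : t.first = u.first) (h2 : v.first = w.first)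
    (hns : ¬ v.IsSuffixOf u) (hs : u.IsSuffixOf v) :
    GIS.pair t u h1 * GIS.pair v w h2 =
      GIS.pair ⟨v.first, v.edges.take (v.edges.length - u.edges.length) ++ t.edges,
        G.isWalk_chopAppend hs h1.symm⟩ w h2 := by
  show GIS.mul _ _ = _
  unfold GIS.mul
  dsimp only
  rw [dif_neg hns, dif_pos hs]

theorem mul_pair_none {t u v w : G.DPath} (h1 : t.first = u.first) (h2 : v.first = w.first)
    (hns : ¬ v.IsSuffixOf u) (hns' : ¬ u.IsSuffixOf v) :
    GIS.pair t u h1 * GIS.pair v w h2 = GIS.zero := by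
  show GIS.mul _ _ = _
  unfold GIS.mul
  dsimp only
  rw [dif_neg hns, dif_neg hns']

theorem pair_inj {a b a' b' : G.DPath} {h : a.first = b.first} {h' : a'.first = b'.first}
    (he : GIS.pair a b h = GIS.pair a' b' h') : a = a' ∧ b = b' := by
  injection he with h1 h2
  exact ⟨h1, h2⟩

theorem isSuffixOf_refl (u : G.DPath) : u.IsSuffixOf u := ⟨[], rfl, rfl⟩

/-- A nonzero idempotent has equal components. -/
theorem idem_eq {t u : G.DPath} (h : t.first = u.first)
    (he : GIS.pair t u h * GIS.pair t u h = GIS.pair t u h) : t = u := by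
  by_cases hs : t.IsSuffixOf u
  · rw [mul_pair_suff h h hs] at he
    obtain ⟨-, h2⟩ := pair_inj he
    have h2e := congrArg DGraph.DPath.edges h2
    simp only at h2e
    have hlen := congrArg List.length h2e
    rw [List.length_append, List.length_take] at hlen
    obtain ⟨l, hl, -⟩ := hs
    simp only [hl, List.length_append] at hlen
    have hll : l = [] := List.eq_nil_of_length_eq_zero (by omega)
    rw [hll, List.nil_append] at hl
    exact dpext h hl.symm
  · by_cases hs' : u.IsSuffixOf t
    · rw [mul_pair_suff2 h h hs hs'] at he
      obtain ⟨h2, -⟩ := pair_inj he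
      have h2e := congrArg DGraph.DPath.edges h2
      simp only at h2e
      have hlen := congrArg List.length h2e
      rw [List.length_append, List.length_take] at hlen
      obtain ⟨l, hl, -⟩ := hs'
      simp only [hl, List.length_append] at hlen
      have hll : l = [] := List.eq_nil_of_length_eq_zero (by omega)
      rw [hll, List.nil_append] at hl
      exact dpext h hl
    · rw [mul_pair_none h h hs hs'] at he
      exact absurd he (by simp)


/-! ### Membership lemmas for `cycleSet` -/

variable {p d : G.DPath}

theorem inv_mem {x : GIS G} (hx : x ∈ cycleSet G p d) : x.inv ∈ cycleSet G p d := by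
  rcases hx with ⟨r, s, v, a, b, h, hvs, hxe, hfa, hea, hfb, heb⟩ | ⟨q, hq, hxe⟩
  · subst hxe; exact Or.inl ⟨s, r, v, b, a, h.symm, hvs, rfl, hfb, heb, hfa, hea⟩
  · subst hxe; exact Or.inr ⟨q, hq, rfl⟩

theorem mem_pair {x : GIS G} (hx : x ∈ cycleSet G p d) :
    ∃ (A B : G.DPath) (h : A.first = B.first), x = GIS.pair A B h := by
  rcases hx with ⟨r, s, v, a, b, h, hvs, hxe, -⟩ | ⟨q, hq, hxe⟩
  · exact ⟨a, b, h, hxe⟩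
  · exact ⟨q, q, rfl, hxe⟩

theorem mem_last (hp : G.IsCircuit p) (hd : d.first = p.first) {A B : G.DPath}
    {h : A.first = B.first} (hx : GIS.pair A B h ∈ cycleSet G p d) : A.last = d.last := by
  rcases hx with ⟨r, s, v, a, b, h', hvs, hxe, hfa, hea, hfb, heb⟩ | ⟨q, hq, hxe⟩
  · obtain ⟨rfl, rfl⟩ := pair_inj hxe
    obtain ⟨lv, hlv, hvf⟩ := hvs
    show G.walkEnd A.first A.edges = d.last
    by_cases hD : d.edges = []
    · have hdl : d.last = p.first := (last_nil hD).trans hd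
      rw [hdl, hea, hD, List.append_nil]
      rcases r with _ | r'
      · rw [powEdges_zero, List.append_nil]
        by_cases hve : v.edges = []
        · rw [hve]
          show A.first = p.first
          rw [hfa, hvf, show lv = p.edges by rw [hlv, hve, List.append_nil]]
          exact hp.2
        · rw [walkEnd_congr A.first (G.walkEnd p.first lv) hve, ← walkEnd_append', ← hlv]
          exact hp.2
      · rw [show r' + 1 = r' + 1 from rfl, powEdges_add, powEdges_one, ← List.append_assoc,
          walkEnd_append', walkEnd_congr _ p.first hp.1]
        exact hp.2
    · rw [hea, walkEnd_append', walkEnd_congr _ d.first hD]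
      exact rfl
  · obtain ⟨rfl, rfl⟩ := pair_inj hxe
    exact last_of_suffix hq


theorem mem_nil_first (hp : G.IsCircuit p) (hd : d.first = p.first) {A B : G.DPath}
    {h : A.first = B.first} (hx : GIS.pair A B h ∈ cycleSet G p d) (hA : A.edges = []) :
    A.first = d.last := by
  rw [← last_nil hA]
  exact mem_last hp hd hx

theorem shape_suffix_pow {v : List G.E} (hv : v <:+ p.edges) (r N : ℕ) (hrN : r < N) :
    (v ++ powEdges p r ++ d.edges) <:+ powEdges p N ++ d.edges := by
  obtain ⟨lv, hlv⟩ := hv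
  refine ⟨powEdges p (N - r - 1) ++ lv, ?_⟩
  have hNp : powEdges p N = powEdges p (N - r - 1) ++ (p.edges ++ powEdges p r) := by
    conv_lhs => rw [show N = (N - r - 1) + (r + 1) by omega]
    rw [powEdges_add, powEdges_succ]
  rw [hNp, ← hlv]
  simp [List.append_assoc]

theorem mem_bound {A B : G.DPath} {h : A.first = B.first}
    (hx : GIS.pair A B h ∈ cycleSet G p d) :
    ∃ k, ∀ N, k ≤ N →
      A.edges <:+ powEdges p N ++ d.edges ∧ B.edges <:+ powEdges p N ++ d.edges := by
  rcases hx with ⟨r, s, v, a, b, h', hvs, hxe, hfa, hea, hfb, heb⟩ | ⟨q, hq, hxe⟩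
  · obtain ⟨rfl, rfl⟩ := pair_inj hxe
    obtain ⟨lv, hlv, -⟩ := hvs
    refine ⟨max r s + 1, fun N hN => ⟨?_, ?_⟩⟩
    · rw [hea]; exact shape_suffix_pow ⟨lv, hlv.symm⟩ r N (by omega)
    · rw [heb]; exact shape_suffix_pow ⟨lv, hlv.symm⟩ s N (by omega)
  · obtain ⟨rfl, rfl⟩ := pair_inj hxe
    obtain ⟨l, hl, -⟩ := hq
    exact ⟨0, fun N _ => ⟨List.IsSuffix.trans ⟨l, hl.symm⟩ (List.suffix_append _ _),
      List.IsSuffix.trans ⟨l, hl.symm⟩ (List.suffix_append _ _)⟩⟩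

/-- Builder for the cycle part of `cycleSet`. -/
theorem mem_cycle_build (hp : G.IsCircuit p) (hd : d.first = p.first) {V W : G.DPath}
    (h : V.first = W.first) {v' : List G.E} {r' s' : ℕ} (hv : v' <:+ p.edges)
    (hVe : V.edges = v' ++ powEdges p r' ++ d.edges)
    (hWe : W.edges = v' ++ powEdges p s' ++ d.edges)
    (hdeg : V.edges = [] → W.edges = [] → V.first = d.last) :
    GIS.pair V W h ∈ cycleSet G p d := by
  obtain ⟨lp, hlp⟩ := hv
  have hwfV : G.IsWalk V.first v' := by
    have hw := V.wf
    rw [hVe, List.append_assoc, G.isWalk_append] at hw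
    exact hw.1
  have hvert : V.first = G.walkEnd p.first lp := by
    rcases hv' : v' with _ | ⟨e, t⟩
    · have hlp' : lp = p.edges := by rw [← hlp, hv', List.append_nil]
      have hpe : G.walkEnd p.first lp = p.first := by
        rw [hlp']; exact hp.2
      rw [hpe]
      rcases Nat.eq_zero_or_pos r' with hr0 | hr0
      · have hVD : V.edges = d.edges := by
          rw [hVe, hv', hr0, powEdges_zero]; simp
        rcases hD : d.edges with _ | ⟨f, u⟩
        · rcases Nat.eq_zero_or_pos s' with hs0 | hs0
          · have hWD : W.edges = [] := by rw [hWe, hv', hs0, powEdges_zero, hD]; simp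
            have hVd := hdeg (by rw [hVD, hD]) hWD
            rw [hVd, last_nil hD, hd]
          · have hWE : W.edges = powEdges p s' := by rw [hWe, hv', hD]; simp
            have hW := W.wf
            rw [hWE, show s' = 1 + (s' - 1) by omega, powEdges_add, powEdges_one,
              G.isWalk_append] at hW
            rw [h]
            exact walk_start_unique hW.1 p.wf hp.1
        · have hV := V.wf
          rw [hVD] at hV
          have hVd : V.first = d.first := walk_start_unique hV d.wf (by rw [hD]; simp)
          rw [hVd, hd]
      · have hV := V.wf
        rw [hVe, hv', List.nil_append, show r' = 1 + (r' - 1) by omega, powEdges_add,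
          powEdges_one, List.append_assoc, G.isWalk_append] at hV
        exact walk_start_unique hV.1 p.wf hp.1
    · have hpw := p.wf
      rw [← hlp, G.isWalk_append, hv'] at hpw
      have hV := hwfV
      rw [hv'] at hV
      exact walk_start_unique hV hpw.2 (by simp)
  refine Or.inl ⟨r', s', ⟨V.first, v', hwfV⟩, V, W, h, ⟨lp, hlp.symm, hvert⟩, rfl, rfl,
      hVe, h.symm, hWe⟩

/-- Builder for the chain part of `cycleSet`. -/
theorem mem_chain_build {V W : G.DPath} (h : V.first = W.first) (he : V.edges = W.edges)
    (hs : V.edges <:+ d.edges) (hl : V.last = d.last) : GIS.pair V W h ∈ cycleSet G p d := by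
  have hVW : V = W := dpext h he
  subst hVW
  exact Or.inr ⟨V, suffix_isSuffixOf hs hl, rfl⟩

theorem normalize (hP : p.edges ≠ []) {v : List G.E} (hv : v <:+ p.edges) :
    ∃ v₀ k, v₀ <:+ p.edges ∧ v₀.length < p.edges.length ∧
      ∀ r : ℕ, v ++ powEdges p r = v₀ ++ powEdges p (r + k) := by
  rcases lt_or_ge v.length p.edges.length with hlt | hge
  · exact ⟨v, 0, hv, hlt, fun r => rfl⟩
  · have hvp : v = p.edges := hv.eq_of_length_le hge
    refine ⟨[], 1, List.nil_suffix, List.length_pos_iff.2 hP, fun r => ?_⟩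
    rw [hvp, List.nil_append, powEdges_succ]

theorem cancel (hP : p.edges ≠ []) {m v vb : List G.E} {a s : ℕ}
    (hv : v.length < p.edges.length) (hvb : vb.length < p.edges.length)
    (h : m ++ (vb ++ powEdges p a ++ d.edges) = v ++ powEdges p s ++ d.edges) :
    a ≤ s ∧ m ++ vb = v ++ powEdges p (s - a) := by
  have hlen := congrArg List.length h
  simp only [List.length_append, powEdges_length] at hlen
  have hn : 0 < p.edges.length := List.length_pos_iff.2 hP
  have has : a ≤ s := by
    by_contra hc
    push_neg at hc
    have h2 : (s + 1) * p.edges.length ≤ a * p.edges.length := Nat.mul_le_mul_right _ hc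
    rw [Nat.succ_mul] at h2
    omega
  refine ⟨has, ?_⟩
  have hs' : powEdges p s = powEdges p (s - a) ++ powEdges p a := by
    rw [← powEdges_add, Nat.sub_add_cancel has]
  rw [hs'] at h
  have h2 : (m ++ vb) ++ (powEdges p a ++ d.edges) =
      (v ++ powEdges p (s - a)) ++ (powEdges p a ++ d.edges) := by
    simp only [List.append_assoc] at h ⊢
    exact h
  exact List.append_cancel_right h2


/-- Core uniqueness lemma: stripping a common prefix from `v p^r d` and `v p^s d`. -/
theorem core (hp : G.IsCircuit p) (hpre : G.NoCommonPrefix p d) {v l V W : List G.E} {r s : ℕ}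
    (hv : v <:+ p.edges) (hrs : r ≤ s)
    (hA : v ++ powEdges p r ++ d.edges = l ++ V)
    (hB : v ++ powEdges p s ++ d.edges = l ++ W) :
    (∃ v' j jj, v' <:+ p.edges ∧ V = v' ++ powEdges p j ++ d.edges ∧
        W = v' ++ powEdges p jj ++ d.edges) ∨ (V = W ∧ V <:+ d.edges) := by
  have hsplit : v ++ powEdges p s ++ d.edges =
      (v ++ powEdges p r) ++ (powEdges p (s - r) ++ d.edges) := by
    conv_lhs => rw [show s = r + (s - r) by omega]
    rw [powEdges_add]
    simp [List.append_assoc]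
  by_cases hk : l.length ≤ (v ++ powEdges p r).length
  · left
    have hVd : V = (v ++ powEdges p r).drop l.length ++ d.edges := by
      have h1 : V = ((v ++ powEdges p r) ++ d.edges).drop l.length := by
        rw [hA, List.drop_left]
      rw [h1, List.drop_append, Nat.sub_eq_zero_of_le hk, List.drop_zero]
    have hWd : W = (v ++ powEdges p r).drop l.length ++ (powEdges p (s - r) ++ d.edges) := by
      have h1 : W = ((v ++ powEdges p r) ++ (powEdges p (s - r) ++ d.edges)).drop l.length := by
        rw [← hsplit, hB, List.drop_left]
      rw [h1, List.drop_append, Nat.sub_eq_zero_of_le hk, List.drop_zero]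
    have hu : (v ++ powEdges p r).drop l.length <:+ powEdges p (r + 1) := by
      refine List.IsSuffix.trans (List.drop_suffix _ _) ?_
      obtain ⟨lv, hlv⟩ := hv
      exact ⟨lv, by rw [← List.append_assoc, hlv, ← powEdges_succ]⟩
    obtain ⟨v', j, hv', hlen', huu⟩ := suffix_pow hp.1 hu
    refine ⟨v', j, j + (s - r), hv', ?_, ?_⟩
    · rw [hVd, huu]
    · rw [hWd, huu, powEdges_add]
      simp [List.append_assoc]
  · push_neg at hk
    rcases Nat.eq_or_lt_of_le hrs with hr | hlt'
    · subst hr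
      have hVW : V = W := List.append_cancel_left (hA.symm.trans hB)
      refine Or.inr ⟨hVW, ?_⟩
      have h1 : V = ((v ++ powEdges p r) ++ d.edges).drop l.length := by
        rw [hA, List.drop_left]
      rw [h1, List.drop_append,
        List.drop_eq_nil_of_le (by omega), List.nil_append]
      exact List.drop_suffix _ _
    · exfalso
      have hL : ∀ X : List G.E, ((v ++ powEdges p r) ++ X).drop (v ++ powEdges p r).length = X :=
        fun X => List.drop_left
      have hR : ∀ Y : List G.E, (l ++ Y).drop (v ++ powEdges p r).length =
          l.drop (v ++ powEdges p r).length ++ Y := by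
        intro Y
        rw [List.drop_append, Nat.sub_eq_zero_of_le hk.le, List.drop_zero]
      have hdropA : d.edges = l.drop (v ++ powEdges p r).length ++ V := by
        have h1 := congrArg (List.drop (v ++ powEdges p r).length) hA
        rw [hL d.edges, hR V] at h1
        exact h1
      have hdropB : powEdges p (s - r) ++ d.edges =
          l.drop (v ++ powEdges p r).length ++ W := by
        have h1 := congrArg (List.drop (v ++ powEdges p r).length) (hsplit.symm.trans hB)
        rw [hL (powEdges p (s - r) ++ d.edges), hR W] at h1
        exact h1
      have htne : l.drop (v ++ powEdges p r).length ≠ [] := by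
        intro hdc
        have h2 := congrArg List.length hdc
        rw [List.length_drop] at h2
        simp only [List.length_nil] at h2
        omega
      rcases ht : l.drop (v ++ powEdges p r).length with _ | ⟨e, t'⟩
      · exact htne ht
      rw [ht] at hdropA hdropB
      rcases hPe : p.edges with _ | ⟨f, Pt⟩
      · exact hp.1 hPe
      have hpow : powEdges p (s - r) ++ d.edges =
          f :: (Pt ++ (powEdges p (s - r - 1) ++ d.edges)) := by
        rw [show s - r = 1 + (s - r - 1) by omega, powEdges_add, powEdges_one, hPe]
        simp [List.append_assoc]
      rw [hpow] at hdropB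
      have hef : f = e := by injection hdropB
      apply hpre [e] (by simp) ?_ ?_
      · rw [hPe, hef]
        exact ⟨Pt, rfl⟩
      · exact ⟨t' ++ V, by rw [hdropA]; rfl⟩


theorem mem_congr {A A' B B' : G.DPath} {h : A.first = B.first} {h' : A'.first = B'.first}
    (hA : A = A') (hB : B = B') (hm : GIS.pair A' B' h' ∈ cycleSet G p d) :
    GIS.pair A B h ∈ cycleSet G p d := by
  subst hA; subst hB; exact hm

theorem mul_mem (hp : G.IsCircuit p) (hd : d.first = p.first) (hpre : G.NoCommonPrefix p d)
    {x y : GIS G} (hx : x ∈ cycleSet G p d) (hy : y ∈ cycleSet G p d) :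
    x * y ∈ cycleSet G p d := by
  have hx' := hx
  have hy' := hy
  obtain ⟨A, B, hAB, rfl⟩ := mem_pair hx
  obtain ⟨C, E, hCE, rfl⟩ := mem_pair hy
  by_cases hs : C.IsSuffixOf B
  · rw [mul_pair_suff hAB hCE hs]
    obtain ⟨m, hm, hmf⟩ := hs
    rcases hx' with ⟨r, s, v, a, b, h', hvs, hxe, hfa, hea, hfb, heb⟩ | ⟨q, hq, hxe⟩
    · obtain ⟨rfl, rfl⟩ := pair_inj hxe
      rcases hy' with ⟨a2, b2, v2, a', b', h2', hvs2, hye, hf2, hca, hfb2, hce⟩ | ⟨q2, hq2, hye⟩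
      · -- cycle * cycle, branch 1
        obtain ⟨rfl, rfl⟩ := pair_inj hye
        obtain ⟨lv, hlv, -⟩ := hvs
        obtain ⟨lv2, hlv2, -⟩ := hvs2
        obtain ⟨v₀, k, hv₀, hlen₀, hnorm⟩ := normalize hp.1 ⟨lv, hlv.symm⟩
        obtain ⟨v₂, k2, hv₂, hlen₂, hnorm2⟩ := normalize hp.1 ⟨lv2, hlv2.symm⟩
        have heaN : A.edges = v₀ ++ powEdges p (r + k) ++ d.edges := by
          rw [hea, hnorm r]
        have hebN : B.edges = v₀ ++ powEdges p (s + k) ++ d.edges := by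
          rw [heb, hnorm s]
        have hcaN : C.edges = v₂ ++ powEdges p (a2 + k2) ++ d.edges := by
          rw [hca, hnorm2 a2]
        have hceN : E.edges = v₂ ++ powEdges p (b2 + k2) ++ d.edges := by
          rw [hce, hnorm2 b2]
        obtain ⟨hle, hmv⟩ := cancel hp.1 hlen₀ hlen₂
          (show m ++ (v₂ ++ powEdges p (a2 + k2) ++ d.edges) =
              v₀ ++ powEdges p (s + k) ++ d.edges by rw [← hcaN, ← hm]; exact hebN)
        refine mem_cycle_build (s' := s + k - (a2 + k2) + (b2 + k2)) hp hd ?hh1 hv₀ heaN ?_ ?_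
        · show B.edges.take (B.edges.length - C.edges.length) ++ E.edges = _
          rw [take_sub hm, hceN,
            show m ++ (v₂ ++ powEdges p (b2 + k2) ++ d.edges) =
              (m ++ v₂) ++ (powEdges p (b2 + k2) ++ d.edges) by simp [List.append_assoc], hmv,
            powEdges_add p (s + k - (a2 + k2)) (b2 + k2)]
          simp [List.append_assoc]
        · intro hAe _
          exact mem_nil_first hp hd hx hAe
      · -- cycle * chain, branch 1 : result equals x
        obtain ⟨hCq, hEq⟩ := pair_inj hye
        refine mem_congr rfl (dpext hAB ?_) hx
        show B.edges.take (B.edges.length - C.edges.length) ++ E.edges = B.edges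
        rw [take_sub hm, show E.edges = C.edges by rw [hEq, hCq]]
        exact hm.symm
    · obtain ⟨rfl, hBq⟩ := pair_inj hxe
      have hBA : B.edges = A.edges := by rw [hBq]
      have hqA : A.IsSuffixOf d := hq
      rcases hy' with ⟨a2, b2, v2, a', b', h2', hvs2, hye, hf2, hca, hfb2, hce⟩ | ⟨q2, hq2, hye⟩
      · -- chain * cycle, branch 1 : forces C.edges = B.edges
        obtain ⟨rfl, rfl⟩ := pair_inj hye
        obtain ⟨lq, hlq, -⟩ := hqA
        have hql : A.edges.length ≤ d.edges.length := by
          rw [hlq, List.length_append]; omega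
        have hCl : d.edges.length ≤ C.edges.length := by
          rw [hca, List.length_append, List.length_append]; omega
        have hCB : C.edges.length ≤ B.edges.length := by
          rw [hm, List.length_append]; omega
        have hCBe : C.edges = B.edges :=
          List.IsSuffix.eq_of_length_le ⟨m, hm.symm⟩ (by rw [hBA]; omega)
        have hme : m = [] := by
          have h2 := congrArg List.length hm
          rw [List.length_append, hCBe] at h2
          exact List.eq_nil_of_length_eq_zero (by omega)
        obtain ⟨lv2, hlv2, -⟩ := hvs2
        refine mem_cycle_build (r' := a2) (s' := b2) hp hd ?hh2 ⟨lv2, hlv2.symm⟩ ?_ ?_ ?_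
        · rw [show A.edges = C.edges from (hCBe.trans hBA).symm]
          exact hca
        · show B.edges.take (B.edges.length - C.edges.length) ++ E.edges = _
          rw [take_sub hm, hme, List.nil_append]
          exact hce
        · intro hAe _
          exact mem_nil_first hp hd hx hAe
      · -- chain * chain, branch 1 : result equals x
        obtain ⟨hCq, hEq⟩ := pair_inj hye
        refine mem_congr rfl (dpext hAB ?_) hx
        show B.edges.take (B.edges.length - C.edges.length) ++ E.edges = B.edges
        rw [take_sub hm, show E.edges = C.edges by rw [hEq, hCq]]
        exact hm.symm
  · -- branch 2
    obtain ⟨k1, hb1⟩ := mem_bound hx'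
    obtain ⟨k2', hb2⟩ := mem_bound hy'
    have hs2 : B.IsSuffixOf C := by
      rcases List.suffix_or_suffix_of_suffix (hb1 (max k1 k2') (le_max_left _ _)).2
          (hb2 (max k1 k2') (le_max_right _ _)).1 with hc | hc
      · exact suffix_isSuffixOf hc
          ((mem_last hp hd (inv_mem hx)).trans (mem_last hp hd hy).symm)
      · exact absurd (suffix_isSuffixOf hc
          ((mem_last hp hd hy).trans (mem_last hp hd (inv_mem hx)).symm)) hs
    rw [mul_pair_suff2 hAB hCE hs hs2]
    obtain ⟨m, hm, hmf⟩ := hs2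
    rcases hx' with ⟨r, s, v, a, b, h', hvs, hxe, hfa, hea, hfb, heb⟩ | ⟨q, hq, hxe⟩
    · obtain ⟨rfl, rfl⟩ := pair_inj hxe
      rcases hy' with ⟨a2, b2, v2, a', b', h2', hvs2, hye, hf2, hca, hfb2, hce⟩ | ⟨q2, hq2, hye⟩
      · -- cycle * cycle, branch 2
        obtain ⟨rfl, rfl⟩ := pair_inj hye
        obtain ⟨lv, hlv, -⟩ := hvs
        obtain ⟨lv2, hlv2, -⟩ := hvs2
        obtain ⟨v₀, k, hv₀, hlen₀, hnorm⟩ := normalize hp.1 ⟨lv, hlv.symm⟩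
        obtain ⟨v₂, k2, hv₂, hlen₂, hnorm2⟩ := normalize hp.1 ⟨lv2, hlv2.symm⟩
        have heaN : A.edges = v₀ ++ powEdges p (r + k) ++ d.edges := by
          rw [hea, hnorm r]
        have hebN : B.edges = v₀ ++ powEdges p (s + k) ++ d.edges := by
          rw [heb, hnorm s]
        have hcaN : C.edges = v₂ ++ powEdges p (a2 + k2) ++ d.edges := by
          rw [hca, hnorm2 a2]
        have hceN : E.edges = v₂ ++ powEdges p (b2 + k2) ++ d.edges := by
          rw [hce, hnorm2 b2]
        obtain ⟨hle, hmv⟩ := cancel hp.1 hlen₂ hlen₀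
          (show m ++ (v₀ ++ powEdges p (s + k) ++ d.edges) =
              v₂ ++ powEdges p (a2 + k2) ++ d.edges by rw [← hebN, ← hm]; exact hcaN)
        refine mem_cycle_build (r' := a2 + k2 - (s + k) + (r + k)) hp hd ?hh3 hv₂ ?_ hceN ?_
        · show C.edges.take (C.edges.length - B.edges.length) ++ A.edges = _
          rw [take_sub hm, heaN,
            show m ++ (v₀ ++ powEdges p (r + k) ++ d.edges) =
              (m ++ v₀) ++ (powEdges p (r + k) ++ d.edges) by simp [List.append_assoc], hmv,
            powEdges_add p (a2 + k2 - (s + k)) (r + k)]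
          simp [List.append_assoc]
        · intro _ hEe
          exact hCE.trans (mem_nil_first hp hd (inv_mem hy) hEe)
      · -- cycle * chain, branch 2
        obtain ⟨hCq, hEq⟩ := pair_inj hye
        have hECe : E.edges = C.edges := by rw [hEq, hCq]
        have hECf : E.first = C.first := by rw [hEq, hCq]
        have hqC : C.IsSuffixOf d := by rw [hCq]; exact hq2
        obtain ⟨lq, hlq, -⟩ := hqC
        have hql : C.edges.length ≤ d.edges.length := by
          rw [hlq, List.length_append]; omega
        have hBl : d.edges.length ≤ B.edges.length := by
          rw [heb, List.length_append, List.length_append]; omega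
        have hBC : B.edges.length ≤ C.edges.length := by
          rw [hm, List.length_append]; omega
        have hBCe : B.edges = C.edges :=
          List.IsSuffix.eq_of_length_le ⟨m, hm.symm⟩ (by omega)
        have hme : m = [] := by
          have h2 := congrArg List.length hm
          rw [List.length_append, ← hBCe] at h2
          exact List.eq_nil_of_length_eq_zero (by omega)
        have hCBf : C.first = B.first := by
          by_cases hne : C.edges = []
          · rw [mem_nil_first hp hd hy hne,
              mem_nil_first hp hd (inv_mem hx) (by rw [hBCe]; exact hne)]
          · exact walk_start_unique C.wf (by rw [← hBCe]; exact B.wf) hne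
        refine mem_congr (dpext ?_ ?_) (dpext ?_ ?_) hx
        · exact hCBf.trans hAB.symm
        · show C.edges.take (C.edges.length - B.edges.length) ++ A.edges = A.edges
          rw [take_sub hm, hme, List.nil_append]
        · exact hECf.trans hCBf
        · rw [hECe, ← hBCe]
    · -- chain * anything, branch 2 : result equals y
      obtain ⟨rfl, hBq⟩ := pair_inj hxe
      refine mem_congr ?_ rfl hy
      refine dpext rfl ?_
      show C.edges.take (C.edges.length - B.edges.length) ++ A.edges = C.edges
      rw [take_sub hm, show A.edges = B.edges by rw [hBq]]
      exact hm.symm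


theorem closed_mem (hp : G.IsCircuit p) (hd : d.first = p.first) (hpre : G.NoCommonPrefix p d)
    {x : GIS G} (hx : x ∈ cycleSet G p d) {z : GIS G} (hle : GIS.le x z) :
    z ∈ cycleSet G p d := by
  obtain ⟨e, hee, hes⟩ := hle
  have hx' := hx
  obtain ⟨A, B, hAB, rfl⟩ := mem_pair hx
  cases e with
  | zero => rw [zero_mul'] at hes; cases hes
  | pair t u h =>
    cases z with
    | zero => rw [mul_zero'] at hes; cases hes
    | pair V W hVW =>
      have htu : t = u := idem_eq h hee
      subst htu
      by_cases hs1 : V.IsSuffixOf t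
      · rw [mul_pair_suff h hVW hs1] at hes
        obtain ⟨rfl, hBX⟩ := pair_inj hes
        obtain ⟨l, hl, hVf⟩ := hs1
        have hXe : B.edges = l ++ W.edges := by
          rw [hBX]
          show A.edges.take (A.edges.length - V.edges.length) ++ W.edges = l ++ W.edges
          rw [take_sub hl]
        rcases hx' with ⟨r, s', v, a, b, h', hvs, hxe, hfa, hea, hfb, heb⟩ | ⟨q, hq, hxe⟩
        · obtain ⟨rfl, rfl⟩ := pair_inj hxe
          obtain ⟨lv, hlv, -⟩ := hvs
          have hdeg : V.edges = [] → W.edges = [] → V.first = d.last := by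
            intro hVe0 _
            rw [hVf, show l = A.edges by rw [hl, hVe0, List.append_nil]]
            exact mem_last hp hd hx
          have hc1 : v.edges ++ powEdges p r ++ d.edges = l ++ V.edges := by
            rw [← hea]; exact hl
          have hc2 : v.edges ++ powEdges p s' ++ d.edges = l ++ W.edges := by
            rw [← heb]; exact hXe
          rcases le_total r s' with hrs | hrs
          · rcases core hp hpre ⟨lv, hlv.symm⟩ hrs hc1 hc2 with
              ⟨v', j, jj, hv', hVe, hWe⟩ | ⟨hVWe, hVD⟩
            · exact mem_cycle_build hp hd hVW hv' hVe hWe hdeg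
            · refine mem_chain_build hVW hVWe hVD ?_
              rw [last_of_suffix ⟨l, hl, hVf⟩]
              exact mem_last hp hd hx
          · rcases core hp hpre ⟨lv, hlv.symm⟩ hrs hc2 hc1 with
              ⟨v', j, jj, hv', hWe, hVe⟩ | ⟨hWVe, hWD⟩
            · exact mem_cycle_build hp hd hVW hv' hVe hWe hdeg
            · refine mem_chain_build hVW hWVe.symm (by rw [hWVe] at hWD; exact hWD) ?_
              rw [last_of_suffix ⟨l, hl, hVf⟩]
              exact mem_last hp hd hx
        · obtain ⟨rfl, hBq⟩ := pair_inj hxe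
          have hBA : B.edges = A.edges := by rw [hBq]
          have hVWe : V.edges = W.edges :=
            List.append_cancel_left (show l ++ V.edges = l ++ W.edges by
              rw [← hl, ← hXe, hBA])
          refine mem_chain_build hVW hVWe ?_ ?_
          · obtain ⟨lq, hlq, -⟩ := hq
            exact List.IsSuffix.trans ⟨l, hl.symm⟩ ⟨lq, hlq.symm⟩
          · rw [last_of_suffix ⟨l, hl, hVf⟩]
            exact mem_last hp hd hx
      · by_cases hs2 : t.IsSuffixOf V
        · rw [mul_pair_suff2 h hVW hs1 hs2] at hes
          obtain ⟨m, hm, -⟩ := id hs2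
          have hpi := pair_inj hes
          have hYe : A.edges = V.edges := by
            rw [hpi.1]
            show V.edges.take (V.edges.length - t.edges.length) ++ t.edges = V.edges
            rw [take_sub hm]
            exact hm.symm
          have hYf : A.first = V.first := by rw [hpi.1]
          have hBW := hpi.2
          subst hBW
          exact mem_congr (dpext hYf hYe).symm rfl hx
        · rw [mul_pair_none h hVW hs1 hs2] at hes
          cases hes

end Aux4

/-- `L_{p,d}` is a closed inverse subsemigroup of `S(Γ)`. -/
theorem stmt_4 (G : DGraph) [Fintype G.V] [Fintype G.E] (p d : G.DPath)
    (hp : G.IsCircuit p) (hd : d.first = p.first) (hpre : G.NoCommonPrefix p d) :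
    IsCISS G (cycleSet G p d) := by
  refine ⟨⟨GIS.pair d d rfl, Or.inr ⟨d, Aux4.isSuffixOf_refl d, rfl⟩⟩, ?_, ?_, ?_⟩
  · exact fun a ha b hb => Aux4.mul_mem hp hd hpre ha hb
  · exact fun a ha => Aux4.inv_mem ha
  · exact fun a ha s hs => Aux4.closed_mem hp hd hpre ha hs
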